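/- If {F_1, …, F_{mn}} ⊆ M_{m,n}(ℂ) is an orthonormal basis with respect to the inner product (X,Y) = tr(XY†), then ∑_{j=1}^{mn} F_j F_j† = n I_m and ∑_{j=1}^{mn} F_j† F_j = m I_n. -/

import Mathlib

open Matrix in
/-- for an orthonormal basis `{F_1,…,F_{mn}}` of `M_{m,n}(ℂ)` under
the trace inner product, `∑ F_j F_j† = n I_m` and `∑ F_j† F_j = m I_n`. -/
theorem stmt_7 {m n : ℕ} (F : Fin (m * n) → Matrix (Fin m) (Fin n) ℂ)
    (hF : ∀ r s, (F r * (F s)ᴴ).trace = if r = s then 1 else 0) :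
    (∑ j, F j * (F j)ᴴ) = (n : ℂ) • (1 : Matrix (Fin m) (Fin m) ℂ) ∧
    (∑ j, (F j)ᴴ * F j) = (m : ℂ) • (1 : Matrix (Fin n) (Fin n) ℂ) := by
  classical
  set e : Fin m × Fin n ≃ Fin (m * n) := finProdFinEquiv
  set H : Matrix (Fin (m * n)) (Fin (m * n)) ℂ :=
    fun j k => F j (e.symm k).1 (e.symm k).2 with hHdef
  have hH1 : H * Hᴴ = 1 := by
    ext r s
    have := hF r s
    simp only [Matrix.trace, Matrix.diag, Matrix.mul_apply, Matrix.conjTranspose_apply] at this ⊢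
    rw [← Equiv.sum_comp e (fun k => H r k * star (H s k))]
    simp only [hHdef, Equiv.symm_apply_apply, Matrix.one_apply]
    rw [← this]
    exact Fintype.sum_prod_type _
  have hH2 : Hᴴ * H = 1 := mul_eq_one_comm.mp hH1
  have key : ∀ (p q : Fin m × Fin n),
      (∑ j, star (F j p.1 p.2) * F j q.1 q.2) = if p = q then 1 else 0 := by
    intro p q
    have := congrFun (congrFun hH2 (e p)) (e q)
    rw [Matrix.mul_apply] at this
    simp only [Matrix.conjTranspose_apply] at this
    simp only [Matrix.mul_apply, Matrix.conjTranspose_apply, hHdef,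
      Equiv.symm_apply_apply, Matrix.one_apply, EmbeddingLike.apply_eq_iff_eq] at this
    exact this
  constructor
  · ext a b
    simp only [Matrix.sum_apply, Matrix.mul_apply, Matrix.conjTranspose_apply,
      Matrix.smul_apply, Matrix.one_apply, smul_eq_mul]
    rw [Finset.sum_comm]
    have : ∀ c : Fin n, (∑ j, F j a c * star (F j b c)) = if a = b then 1 else 0 := by
      intro c
      have := key (b, c) (a, c)
      simp only [Prod.mk.injEq, and_true, eq_comm] at this
      rw [this]
      exact Finset.sum_congr rfl fun j _ => by ring
    simp only [this, Finset.sum_const, Finset.card_univ, Fintype.card_fin, nsmul_eq_mul]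
  · ext c d
    simp only [Matrix.sum_apply, Matrix.mul_apply, Matrix.conjTranspose_apply,
      Matrix.smul_apply, Matrix.one_apply, smul_eq_mul]
    rw [Finset.sum_comm]
    have : ∀ a : Fin m, (∑ j, star (F j a c) * F j a d) = if c = d then 1 else 0 := by
      intro a
      have := key (a, c) (a, d)
      simpa using this
    simp only [this, Finset.sum_const, Finset.card_univ, Fintype.card_fin, nsmul_eq_mul]
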